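/- arXiv:1306.5026 — 4 statements merged into one kernel-verified Lean document; each statement's English description precedes it below -/
import Mathlib

section
/- In a maximal planar graph on n ≥ 5 vertices, the set of vertices of degree 3 forms an independent set. -/
open Finset

/-- `G` has `H` as a minor: there are disjoint nonempty connected branch sets in `G`,
one for each vertex of `H`, with an edge of `G` between the branch sets of any two
adjacent vertices of `H`. -/
def HasMinor {V W : Type*} (G : SimpleGraph V) (H : SimpleGraph W) : Prop :=
  ∃ B : W → Set V, (∀ w, (B w).Nonempty) ∧
    (∀ w₁ w₂, w₁ ≠ w₂ → Disjoint (B w₁) (B w₂)) ∧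
    (∀ w, (G.induce (B w)).Connected) ∧
    (∀ w₁ w₂, H.Adj w₁ w₂ → ∃ u ∈ B w₁, ∃ v ∈ B w₂, G.Adj u v)

/-- Planarity, via Wagner's theorem: no `K₅` minor and no `K₃,₃` minor. -/
def IsPlanar {V : Type*} (G : SimpleGraph V) : Prop :=
  ¬ HasMinor G (⊤ : SimpleGraph (Fin 5)) ∧
  ¬ HasMinor G (completeBipartiteGraph (Fin 3) (Fin 3))

namespace MPAux

variable {V : Type*} [Fintype V] [DecidableEq V]

/-- Delete all edges at `x`. -/
def delVert (G : SimpleGraph V) (x : V) : SimpleGraph V where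
  Adj a b := G.Adj a b ∧ a ≠ x ∧ b ≠ x
  symm := ⟨fun a b ⟨h, h1, h2⟩ => ⟨h.symm, h2, h1⟩⟩
  loopless := ⟨fun a h => G.irrefl h.1⟩

instance (G : SimpleGraph V) [DecidableRel G.Adj] (x : V) : DecidableRel (delVert G x).Adj :=
  fun a b => inferInstanceAs (Decidable (G.Adj a b ∧ a ≠ x ∧ b ≠ x))

/-- Restrict to edges inside `s`. -/
def restrict (G : SimpleGraph V) (s : Finset V) : SimpleGraph V where
  Adj a b := G.Adj a b ∧ a ∈ s ∧ b ∈ s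
  symm := ⟨fun a b ⟨h, h1, h2⟩ => ⟨h.symm, h2, h1⟩⟩
  loopless := ⟨fun a h => G.irrefl h.1⟩

instance (G : SimpleGraph V) [DecidableRel G.Adj] (s : Finset V) :
    DecidableRel (restrict G s).Adj :=
  fun a b => inferInstanceAs (Decidable (G.Adj a b ∧ a ∈ s ∧ b ∈ s))

/-- Delete the edge `u v`. -/
def delEdge (G : SimpleGraph V) (u v : V) : SimpleGraph V where
  Adj a b := G.Adj a b ∧ s(a, b) ≠ s(u, v)
  symm := ⟨fun a b ⟨h, h1⟩ => ⟨h.symm, by rwa [Sym2.eq_swap]⟩⟩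
  loopless := ⟨fun a h => G.irrefl h.1⟩

instance (G : SimpleGraph V) [DecidableRel G.Adj] (u v : V) :
    DecidableRel (delEdge G u v).Adj :=
  fun a b => inferInstanceAs (Decidable (G.Adj a b ∧ s(a, b) ≠ s(u, v)))

/-- Contract the edge `x y`, keeping `x` and isolating `y`. -/
def contract (G : SimpleGraph V) (x y : V) : SimpleGraph V where
  Adj a b := a ≠ b ∧ a ≠ y ∧ b ≠ y ∧
    (G.Adj a b ∨ (a = x ∧ G.Adj y b) ∨ (b = x ∧ G.Adj a y))
  symm := by
    refine ⟨?_⟩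
    rintro a b ⟨h0, h1, h2, h3⟩
    refine ⟨h0.symm, h2, h1, ?_⟩
    rcases h3 with h | ⟨h, h'⟩ | ⟨h, h'⟩
    · exact Or.inl h.symm
    · exact Or.inr (Or.inr ⟨h, h'.symm⟩)
    · exact Or.inr (Or.inl ⟨h, h'.symm⟩)
  loopless := ⟨fun a h => h.1 rfl⟩

instance (G : SimpleGraph V) [DecidableRel G.Adj] (x y : V) :
    DecidableRel (contract G x y).Adj :=
  fun a b => inferInstanceAs (Decidable (a ≠ b ∧ a ≠ y ∧ b ≠ y ∧
    (G.Adj a b ∨ (a = x ∧ G.Adj y b) ∨ (b = x ∧ G.Adj a y))))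

section counting

variable (G : SimpleGraph V) [DecidableRel G.Adj]

lemma delVert_edgeFinset (x : V) :
    (delVert G x).edgeFinset = G.edgeFinset \ G.incidenceFinset x := by
  ext e
  induction e with
  | _ a b =>
    rw [SimpleGraph.mem_edgeFinset]
    simp only [SimpleGraph.mem_edgeFinset, SimpleGraph.mem_edgeSet,
      Finset.mem_sdiff, SimpleGraph.mem_incidenceFinset, SimpleGraph.incidenceSet,
      Set.mem_setOf_eq, SimpleGraph.mem_edgeSet, Sym2.mem_iff, delVert]
    constructor
    · rintro ⟨h, h1, h2⟩
      exact ⟨h, fun hx => hx.2.elim (fun h' => h1 h'.symm) (fun h' => h2 h'.symm)⟩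
    · rintro ⟨h, h2⟩
      refine ⟨h, ?_, ?_⟩ <;> rintro rfl <;> exact h2 ⟨h, by simp⟩

lemma delVert_card_add (x : V) :
    (delVert G x).edgeFinset.card + G.degree x = G.edgeFinset.card := by
  rw [delVert_edgeFinset, ← SimpleGraph.card_incidenceFinset_eq_degree]
  refine Finset.card_sdiff_add_card_eq_card ?_
  rw [SimpleGraph.incidenceFinset_eq_filter]
  exact Finset.filter_subset _ _

lemma delEdge_card_add {u v : V} (h : G.Adj u v) :
    (delEdge G u v).edgeFinset.card + 1 = G.edgeFinset.card := by
  have : (delEdge G u v).edgeFinset = G.edgeFinset.erase s(u, v) := by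
    ext e
    induction e with
    | _ a b =>
      rw [SimpleGraph.mem_edgeFinset]
      simp only [SimpleGraph.mem_edgeFinset, SimpleGraph.mem_edgeSet, Finset.mem_erase,
        delEdge]
      tauto
  rw [this]
  exact Finset.card_erase_add_one (by simpa using h)

lemma contract_card (x y : V) (hxy : G.Adj x y) :
    G.edgeFinset.card ≤ (contract G x y).edgeFinset.card + 1 +
      (G.neighborFinset x ∩ G.neighborFinset y).card := by
  classical
  set A : Finset (Sym2 V) := G.edgeFinset \ G.incidenceFinset y with hA
  set T : Finset V := ((G.neighborFinset y).erase x).filter (fun b => ¬ G.Adj x b) with hT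
  set B : Finset (Sym2 V) := T.image (fun b => s(x, b)) with hBdef
  have hsubA : A ⊆ (contract G x y).edgeFinset := by
    intro e he
    induction e with
    | _ a b =>
      rw [hA, Finset.mem_sdiff, SimpleGraph.mem_edgeFinset, SimpleGraph.mem_edgeSet,
        SimpleGraph.mem_incidenceFinset] at he
      obtain ⟨hab, hnin⟩ := he
      have hy : ¬ (y = a ∨ y = b) := by
        intro hy
        exact hnin ⟨(G.mem_edgeSet).mpr hab, Sym2.mem_iff.mpr hy⟩
      push_neg at hy
      simp only [SimpleGraph.mem_edgeFinset, SimpleGraph.mem_edgeSet]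
      exact ⟨hab.ne, fun h => hy.1 h.symm, fun h => hy.2 h.symm, Or.inl hab⟩
  have hsubB : B ⊆ (contract G x y).edgeFinset := by
    intro e he
    rw [hBdef, Finset.mem_image] at he
    obtain ⟨b, hb, rfl⟩ := he
    rw [hT, Finset.mem_filter, Finset.mem_erase, SimpleGraph.mem_neighborFinset] at hb
    obtain ⟨⟨hbx, hyb⟩, hnadj⟩ := hb
    simp only [SimpleGraph.mem_edgeFinset, SimpleGraph.mem_edgeSet]
    exact ⟨fun h => hbx h.symm, hxy.ne, hyb.ne', Or.inr (Or.inl ⟨rfl, hyb⟩)⟩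
  have hdisj : Disjoint A B := by
    rw [Finset.disjoint_left]
    intro e heA heB
    rw [hBdef, Finset.mem_image] at heB
    obtain ⟨b, hb, rfl⟩ := heB
    rw [hT, Finset.mem_filter] at hb
    rw [hA, Finset.mem_sdiff, SimpleGraph.mem_edgeFinset, SimpleGraph.mem_edgeSet] at heA
    exact hb.2 heA.1
  have hcardB : B.card = T.card := by
    rw [hBdef]
    refine Finset.card_image_of_injOn ?_
    intro a ha b hb hab
    rw [Finset.mem_coe, hT, Finset.mem_filter, Finset.mem_erase] at ha hb
    rcases (Sym2.mk_eq_mk_iff (p := (x, a)) (q := (x, b))).mp hab with h | h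
    · exact (Prod.ext_iff.mp h).2
    · exact absurd (Prod.ext_iff.mp h).2 ha.1.1
  have hcardT : T.card + (G.neighborFinset x ∩ G.neighborFinset y).card + 1 =
      G.degree y := by
    have h1 : T = (G.neighborFinset y).erase x \ G.neighborFinset x := by
      rw [hT]
      ext b
      simp [and_comm]
    have h2 : (G.neighborFinset y).erase x ∩ G.neighborFinset x =
        G.neighborFinset x ∩ G.neighborFinset y := by
      ext b
      simp only [Finset.mem_inter, Finset.mem_erase, SimpleGraph.mem_neighborFinset]
      constructor
      · rintro ⟨⟨_, h⟩, h'⟩; exact ⟨h', h⟩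
      · rintro ⟨h', h⟩; exact ⟨⟨fun hbx => G.irrefl (hbx ▸ h'), h⟩, h'⟩
    have h3 := Finset.card_sdiff_add_card_inter ((G.neighborFinset y).erase x)
      (G.neighborFinset x)
    rw [h2] at h3
    have h4 : ((G.neighborFinset y).erase x).card + 1 = G.degree y :=
      Finset.card_erase_add_one (by simpa using hxy.symm)
    rw [h1]
    omega
  have hcardA : A.card + G.degree y = G.edgeFinset.card := by
    rw [hA, ← SimpleGraph.card_incidenceFinset_eq_degree]
    refine Finset.card_sdiff_add_card_eq_card ?_
    rw [SimpleGraph.incidenceFinset_eq_filter]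
    exact Finset.filter_subset _ _
  have hunion : (A ∪ B).card ≤ (contract G x y).edgeFinset.card :=
    Finset.card_le_card (Finset.union_subset hsubA hsubB)
  rw [Finset.card_union_of_disjoint hdisj] at hunion
  omega

/-- Edge bound from a support. -/
lemma edge_card_le_choose (s : Finset V) (hs : ∀ a b, G.Adj a b → a ∈ s) :
    G.edgeFinset.card ≤ s.card.choose 2 := by
  classical
  have : G.edgeFinset.card ≤ (s.powersetCard 2).card := by
    refine Finset.card_le_card_of_injOn
      (fun e => Sym2.lift ⟨fun a b => ({a, b} : Finset V), fun a b => by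
        simp [Finset.pair_comm]⟩ e) ?_ ?_
    · intro e he
      induction e with
      | _ a b =>
        rw [Finset.mem_coe, SimpleGraph.mem_edgeFinset, SimpleGraph.mem_edgeSet] at he
        simp only [Sym2.lift_mk]
        rw [Finset.mem_coe, Finset.mem_powersetCard]
        constructor
        · intro z hz
          rcases Finset.mem_insert.mp hz with rfl | hz
          · exact hs _ _ he
          · rw [Finset.mem_singleton] at hz
            subst hz
            exact hs _ _ he.symm
        · rw [Finset.card_insert_of_notMem (by simpa using he.ne), Finset.card_singleton]
    · intro e he e' he' heq
      induction e with
      | _ a b =>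
        induction e' with
        | _ c d =>
          rw [Finset.mem_coe, SimpleGraph.mem_edgeFinset, SimpleGraph.mem_edgeSet] at he he'
          simp only [Sym2.lift_mk] at heq
          have ha : a ∈ ({c, d} : Finset V) := by
            rw [← heq]; simp
          have hb : b ∈ ({c, d} : Finset V) := by
            rw [← heq]; simp
          simp only [Finset.mem_insert, Finset.mem_singleton] at ha hb
          rcases ha with rfl | rfl
          · rcases hb with rfl | rfl
            · exact absurd rfl he.ne
            · rfl
          · rcases hb with rfl | rfl
            · rw [Sym2.eq_swap]
            · exact absurd rfl he.ne
  rwa [Finset.card_powersetCard] at this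

lemma degree_sum_le (s : Finset V) :
    ∑ v ∈ s, G.degree v ≤ 2 * G.edgeFinset.card := by
  rw [← SimpleGraph.sum_degrees_eq_twice_card_edges]
  exact Finset.sum_le_sum_of_subset (Finset.subset_univ s)

end counting

end MPAux

namespace MPAux

variable {V : Type*} [Fintype V] [DecidableEq V]

lemma connected_induce_singleton (G : SimpleGraph V) (a : V) :
    (G.induce ({a} : Set V)).Connected := by
  rw [SimpleGraph.connected_iff]
  refine ⟨?_, ⟨⟨a, rfl⟩⟩⟩
  rintro ⟨u, hu⟩ ⟨v, hv⟩
  rw [Set.mem_singleton_iff] at hu hv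
  subst hu; subst hv
  rfl

lemma hasMinor_of_clique {k : ℕ} (G : SimpleGraph V) (f : Fin k → V)
    (hinj : Function.Injective f) (hadj : ∀ i j, i ≠ j → G.Adj (f i) (f j)) :
    HasMinor G (⊤ : SimpleGraph (Fin k)) := by
  refine ⟨fun i => {f i}, fun i => ⟨f i, rfl⟩, ?_, ?_, ?_⟩
  · intro i j hij
    rw [Set.disjoint_singleton_left, Set.mem_singleton_iff]
    exact fun h => hij (hinj h)
  · intro i
    exact connected_induce_singleton G (f i)
  · intro i j hij
    exact ⟨f i, rfl, f j, rfl, hadj i j ((SimpleGraph.top_adj i j).mp hij)⟩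

lemma hasMinor_mono {G G' : SimpleGraph V} (h : G ≤ G') {W : Type*} {H : SimpleGraph W} :
    HasMinor G H → HasMinor G' H := by
  rintro ⟨B, h1, h2, h3, h4⟩
  refine ⟨B, h1, h2, fun w => (h3 w).mono ?_, fun w1 w2 hw => ?_⟩
  · intro a b hab
    simp only [SimpleGraph.comap_adj, Function.Embedding.coe_subtype] at hab ⊢
    exact h hab
  · obtain ⟨u, hu, v, hv, huv⟩ := h4 w1 w2 hw
    exact ⟨u, hu, v, hv, h huv⟩

lemma reach_eq {V' : Type*} {G : SimpleGraph V'} {u v : V'} (h : G.Reachable u v)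
    (hu : ∀ z, ¬ G.Adj u z) : u = v := by
  obtain ⟨w⟩ := h
  cases w with
  | nil => rfl
  | cons h' _ => exact absurd h' (hu _)

lemma branch_eq_singleton {G : SimpleGraph V} {y : V} (hy : ∀ z, ¬ G.Adj y z)
    {B : Set V} (hB : (G.induce B).Connected) (hyB : y ∈ B) : B = {y} := by
  ext z
  rw [Set.mem_singleton_iff]
  constructor
  · intro hz
    have := reach_eq (hB.preconnected ⟨y, hyB⟩ ⟨z, hz⟩) ?_
    · exact (congrArg Subtype.val this).symm
    · rintro ⟨w, hw⟩ hadj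
      simp only [SimpleGraph.comap_adj, Function.Embedding.coe_subtype] at hadj
      exact hy w hadj
  · rintro rfl; exact hyB

lemma walk_transfer {G' G : SimpleGraph V} {B' B : Set V} (hBB : B' ⊆ B)
    (step : ∀ (p q : V), p ∈ B' → q ∈ B' → G'.Adj p q →
      ∀ (hp : p ∈ B) (hq : q ∈ B), (G.induce B).Reachable ⟨p, hp⟩ ⟨q, hq⟩) :
    ∀ (u v : ↥B'), (G'.induce B').Reachable u v →
      (G.induce B).Reachable ⟨u.1, hBB u.2⟩ ⟨v.1, hBB v.2⟩ := by
  intro u v hr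
  obtain ⟨w⟩ := hr
  induction w with
  | nil => exact SimpleGraph.Reachable.refl _
  | @cons a m c h p ih =>
    have hadj : G'.Adj a.1 m.1 := by
      simpa only [SimpleGraph.comap_adj, Function.Embedding.coe_subtype] using h
    exact (step a.1 m.1 a.2 m.2 hadj _ _).trans ih

lemma fin_exists_ne {k : ℕ} (hk : 2 ≤ k) (i : Fin k) : ∃ j : Fin k, j ≠ i := by
  haveI : Nontrivial (Fin k) := by
    refine ⟨⟨⟨0, by omega⟩, ⟨1, by omega⟩, ?_⟩⟩
    intro h
    have := congrArg Fin.val h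
    simp at this
  exact exists_ne i

lemma contract_branch_connected {G : SimpleGraph V} {x y : V} (hxy : G.Adj x y)
    {B' : Set V} (hB' : ((contract G x y).induce B').Connected) (hx : x ∈ B') :
    (G.induce (B' ∪ {y})).Connected := by
  set B : Set V := B' ∪ {y} with hBdef
  have hBB : B' ⊆ B := Set.subset_union_left
  have hyB : y ∈ B := Set.mem_union_right _ rfl
  have hxB : x ∈ B := hBB hx
  have step : ∀ (p q : V), p ∈ B' → q ∈ B' → (contract G x y).Adj p q →
      ∀ (hp : p ∈ B) (hq : q ∈ B), (G.induce B).Reachable ⟨p, hp⟩ ⟨q, hq⟩ := by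
    intro p q _ _ hadj hp hq
    obtain ⟨hne, hpy, hqy, hcase⟩ := hadj
    rcases hcase with h | ⟨rfl, h⟩ | ⟨rfl, h⟩
    · exact SimpleGraph.Adj.reachable (by
        simp only [SimpleGraph.comap_adj, Function.Embedding.coe_subtype]; exact h)
    · refine (SimpleGraph.Adj.reachable (v := (⟨y, hyB⟩ : ↥B)) ?_).trans
        (SimpleGraph.Adj.reachable ?_) <;>
        simp only [SimpleGraph.comap_adj, Function.Embedding.coe_subtype]
      · exact hxy
      · exact h
    · refine (SimpleGraph.Adj.reachable (v := (⟨y, hyB⟩ : ↥B)) ?_).trans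
        (SimpleGraph.Adj.reachable ?_) <;>
        simp only [SimpleGraph.comap_adj, Function.Embedding.coe_subtype]
      · exact h
      · exact hxy.symm
  rw [SimpleGraph.connected_iff]
  refine ⟨?_, ⟨⟨x, hxB⟩⟩⟩
  have key : ∀ u : ↥B, (G.induce B).Reachable u ⟨x, hxB⟩ := by
    rintro ⟨u, hu | hu⟩
    · exact walk_transfer hBB step ⟨u, hu⟩ ⟨x, hx⟩ (hB'.preconnected _ _)
    · rw [Set.mem_singleton_iff] at hu
      subst hu
      exact SimpleGraph.Adj.reachable (by
        simp only [SimpleGraph.comap_adj, Function.Embedding.coe_subtype]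
        exact hxy.symm)
  intro u v
  exact (key u).trans (key v).symm

lemma hasMinor_of_contract {G : SimpleGraph V} {x y : V} (hxy : G.Adj x y) {k : ℕ}
    (hk : 2 ≤ k) (h : HasMinor (contract G x y) (⊤ : SimpleGraph (Fin k))) :
    HasMinor G (⊤ : SimpleGraph (Fin k)) := by
  classical
  obtain ⟨B', h1, h2, h3, h4⟩ := h
  have hiso : ∀ z, ¬ (contract G x y).Adj y z := fun z hz => hz.2.1 rfl
  have hyB' : ∀ i, y ∉ B' i := by
    intro i hyi
    have hsing : B' i = {y} := branch_eq_singleton hiso (h3 i) hyi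
    obtain ⟨j, hj⟩ := fin_exists_ne hk i
    obtain ⟨u, hu, v, hv, huv⟩ := h4 j i ((SimpleGraph.top_adj j i).mpr hj)
    rw [hsing, Set.mem_singleton_iff] at hv
    subst hv
    exact huv.2.2.1 rfl
  set B : Fin k → Set V := fun i => if x ∈ B' i then B' i ∪ {y} else B' i with hBdef
  have hsub : ∀ i, B' i ⊆ B i := by
    intro i z hz
    by_cases hxi : x ∈ B' i <;> simp only [B, if_pos, if_neg, hxi, if_true, if_false]
    · exact Set.mem_union_left _ hz
    · exact hz
  refine ⟨B, ?_, ?_, ?_, ?_⟩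
  · intro i
    obtain ⟨a, ha⟩ := h1 i
    exact ⟨a, hsub i ha⟩
  · intro i j hij
    have hd := h2 i j hij
    have hxij : ¬ (x ∈ B' i ∧ x ∈ B' j) := by
      rintro ⟨hi, hj⟩
      exact (Set.disjoint_left.mp hd hi) hj
    by_cases hxi : x ∈ B' i <;> by_cases hxj : x ∈ B' j <;>
      simp only [B, hxi, hxj, if_true, if_false]
    · exact absurd ⟨hxi, hxj⟩ hxij
    · exact Set.disjoint_union_left.mpr ⟨hd,
        Set.disjoint_singleton_left.mpr (hyB' j)⟩
    · exact Set.disjoint_union_right.mpr ⟨hd,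
        Set.disjoint_singleton_right.mpr (hyB' i)⟩
    · exact hd
  · intro i
    by_cases hxi : x ∈ B' i
    · rw [show B i = B' i ∪ {y} from by simp only [B, if_pos hxi]]
      exact contract_branch_connected hxy (h3 i) hxi
    · rw [show B i = B' i from by simp only [B, if_neg hxi]]
      refine (h3 i).mono ?_
      rintro ⟨a, ha⟩ ⟨b, hb⟩ hab
      simp only [SimpleGraph.comap_adj, Function.Embedding.coe_subtype] at hab ⊢
      obtain ⟨hne, hay, hby, hcase⟩ := hab
      rcases hcase with h | ⟨h, _⟩ | ⟨h, _⟩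
      · exact h
      · exact absurd (h ▸ ha) hxi
      · exact absurd (h ▸ hb) hxi
  · intro i j hij
    obtain ⟨u, hu, v, hv, huv⟩ := h4 i j hij
    obtain ⟨hne, huy, hvy, hcase⟩ := huv
    rcases hcase with hGuv | ⟨hux, hyv⟩ | ⟨hvx, huy'⟩
    · exact ⟨u, hsub i hu, v, hsub j hv, hGuv⟩
    · subst hux
      refine ⟨y, ?_, v, hsub j hv, hyv⟩
      simp only [B, if_pos hu]
      exact Set.mem_union_right _ rfl
    · subst hvx
      refine ⟨u, hsub i hu, y, ?_, huy'⟩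
      simp only [B, if_pos hv]
      exact Set.mem_union_right _ rfl

/-- Branch sets of a complete minor live inside the support. -/
lemma branch_subset_support {G : SimpleGraph V} {S : Set V}
    (hsupp : ∀ a b, G.Adj a b → a ∈ S) {k : ℕ} (hk : 2 ≤ k)
    {B : Fin k → Set V}
    (h2 : ∀ i j, i ≠ j → Disjoint (B i) (B j))
    (h3 : ∀ i, (G.induce (B i)).Connected)
    (h4 : ∀ i j, ((⊤ : SimpleGraph (Fin k)).Adj i j) → ∃ u ∈ B i, ∃ v ∈ B j, G.Adj u v) :
    ∀ i, B i ⊆ S := by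
  intro i z hz
  by_contra hzs
  have hiso : ∀ w, ¬ G.Adj z w := fun w hw => hzs (hsupp _ _ hw)
  have hsing : B i = {z} := branch_eq_singleton hiso (h3 i) hz
  obtain ⟨j, hj⟩ := fin_exists_ne hk i
  obtain ⟨u, hu, v, hv, huv⟩ := h4 i j ((SimpleGraph.top_adj i j).mpr hj.symm)
  rw [hsing, Set.mem_singleton_iff] at hu
  subst hu
  exact hiso v huv

/-- Add an apex vertex adjacent to the whole support of a complete minor. -/
lemma hasMinor_succ_of_restrict (G : SimpleGraph V) [DecidableRel G.Adj] {x : V} {k : ℕ}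
    (hk : 2 ≤ k)
    (h : HasMinor (restrict G (G.neighborFinset x)) (⊤ : SimpleGraph (Fin k))) :
    HasMinor G (⊤ : SimpleGraph (Fin (k + 1))) := by
  obtain ⟨B, h1, h2, h3, h4⟩ := h
  have hsupp : ∀ a b, (restrict G (G.neighborFinset x)).Adj a b →
      a ∈ (↑(G.neighborFinset x) : Set V) := fun a b hab => hab.2.1
  have hsub : ∀ i, B i ⊆ ↑(G.neighborFinset x) :=
    branch_subset_support hsupp hk h2 h3 h4
  refine ⟨Fin.cons {x} B, ?_, ?_, ?_, ?_⟩
  · refine Fin.cases ?_ ?_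
    · exact ⟨x, rfl⟩
    · exact h1
  · refine Fin.cases ?_ ?_
    · refine Fin.cases ?_ ?_
      · intro h; exact absurd rfl h
      · intro j _
        simp only [Fin.cons_zero, Fin.cons_succ]
        rw [Set.disjoint_singleton_left]
        intro hx
        have := hsub j hx
        rw [Finset.mem_coe, SimpleGraph.mem_neighborFinset] at this
        exact G.irrefl this
    · intro i
      refine Fin.cases ?_ ?_
      · intro _
        simp only [Fin.cons_zero, Fin.cons_succ]
        rw [Set.disjoint_singleton_right]
        intro hx
        have := hsub i hx
        rw [Finset.mem_coe, SimpleGraph.mem_neighborFinset] at this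
        exact G.irrefl this
      · intro j hij
        simp only [Fin.cons_succ]
        exact h2 i j (fun h => hij (congrArg Fin.succ h))
  · refine Fin.cases ?_ ?_
    · exact connected_induce_singleton G x
    · intro i
      refine (h3 i).mono ?_
      intro a b hab
      simp only [SimpleGraph.comap_adj, Function.Embedding.coe_subtype] at hab ⊢
      exact hab.1
  · refine Fin.cases ?_ ?_
    · refine Fin.cases ?_ ?_
      · intro h; exact absurd rfl ((SimpleGraph.top_adj _ _).mp h)
      · intro j _
        obtain ⟨b, hb⟩ := h1 j
        have hxb : G.Adj x b := by
          have := hsub j hb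
          rwa [Finset.mem_coe, SimpleGraph.mem_neighborFinset] at this
        exact ⟨x, rfl, b, by simpa using hb, hxb⟩
    · intro i
      refine Fin.cases ?_ ?_
      · intro _
        obtain ⟨b, hb⟩ := h1 i
        have hxb : G.Adj x b := by
          have := hsub i hb
          rwa [Finset.mem_coe, SimpleGraph.mem_neighborFinset] at this
        exact ⟨b, by simpa using hb, x, rfl, hxb.symm⟩
      · intro j hij
        have hij' : i ≠ j := by
          intro h
          exact ((SimpleGraph.top_adj _ _).mp hij) (congrArg Fin.succ h)
        obtain ⟨u, hu, v, hv, huv⟩ := h4 i j ((SimpleGraph.top_adj i j).mpr hij')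
        exact ⟨u, by simpa using hu, v, by simpa using hv, huv.1⟩

end MPAux

namespace MPAux

variable {V : Type*} [Fintype V] [DecidableEq V]

lemma exists_adj_of_pos (G : SimpleGraph V) [DecidableRel G.Adj]
    (h : 0 < G.edgeFinset.card) : ∃ a b, G.Adj a b := by
  obtain ⟨e, he⟩ := Finset.card_pos.mp h
  revert he
  refine Sym2.ind ?_ e
  intro a b he
  exact ⟨a, b, by simpa using he⟩

lemma delVert_le (G : SimpleGraph V) (x : V) : delVert G x ≤ G := fun _ _ hab => hab.1

lemma delEdge_le (G : SimpleGraph V) (u v : V) : delEdge G u v ≤ G := fun _ _ hab => hab.1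

lemma restrict_le (G : SimpleGraph V) (s : Finset V) : restrict G s ≤ G := fun _ _ hab => hab.1

/-- A graph with at least `2n - 2` edges on a support of `n ≥ 2` vertices has a `K₄` minor. -/
theorem k4_minor (n : ℕ) : ∀ (m : ℕ) (G : SimpleGraph V) [DecidableRel G.Adj] (s : Finset V),
    (∀ a b, G.Adj a b → a ∈ s) → s.card = n → G.edgeFinset.card = m →
    2 ≤ s.card → 2 * s.card ≤ m + 2 → HasMinor G (⊤ : SimpleGraph (Fin 4)) := by
  induction n using Nat.strong_induction_on with
  | _ n ihn =>
  intro m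
  induction m using Nat.strong_induction_on with
  | _ m ihm =>
  intro G instG s hsupp hcard hecard hs2 hineq
  subst hcard hecard
  by_cases hn4 : s.card ≤ 3
  · exfalso
    have hch := edge_card_le_choose G s hsupp
    have h23 : s.card = 2 ∨ s.card = 3 := by omega
    rcases h23 with h | h
    · rw [h] at hch hineq
      have hv : Nat.choose 2 2 = 1 := rfl
      omega
    · rw [h] at hch hineq
      have hv : Nat.choose 3 2 = 3 := rfl
      omega
  · push_neg at hn4
    by_cases hm : 2 * s.card ≤ G.edgeFinset.card + 1
    · -- surplus edge: delete one
      obtain ⟨u, v, huv⟩ := exists_adj_of_pos G (by omega)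
      refine hasMinor_mono (delEdge_le G u v) ?_
      have hcd := delEdge_card_add G huv
      exact ihm (delEdge G u v).edgeFinset.card (by omega) (delEdge G u v) s
        (fun a b hab => hsupp a b hab.1) rfl rfl hs2 (by omega)
    · push_neg at hm
      have hmeq : G.edgeFinset.card + 2 = 2 * s.card := by omega
      -- a vertex of degree at most 3
      have hx : ∃ x ∈ s, G.degree x ≤ 3 := by
        by_contra h
        push_neg at h
        have hsum : 4 * s.card ≤ ∑ v ∈ s, G.degree v := by
          calc 4 * s.card = ∑ _v ∈ s, 4 := by
                rw [Finset.sum_const, smul_eq_mul, mul_comm]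
          _ ≤ _ := Finset.sum_le_sum (fun i hi => h i hi)
        have := degree_sum_le G s
        omega
      obtain ⟨x, hxs, hdx⟩ := hx
      -- generic contraction step at x
      have contractStep : ∀ a, G.Adj a x →
          (G.neighborFinset a ∩ G.neighborFinset x).card ≤ 1 →
          HasMinor G (⊤ : SimpleGraph (Fin 4)) := by
        intro a hax hc
        have h5 := contract_card G a x hax
        refine hasMinor_of_contract hax (by norm_num) ?_
        refine ihn (s.card - 1) (by omega) (contract G a x).edgeFinset.card
          (contract G a x) (s.erase x) ?_ ?_ rfl ?_ ?_
        · intro p q hpq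
          obtain ⟨hne, hpx, hqx, hcase⟩ := hpq
          rw [Finset.mem_erase]
          refine ⟨hpx, ?_⟩
          rcases hcase with h | ⟨rfl, _⟩ | ⟨_, h⟩
          · exact hsupp _ _ h
          · exact hsupp _ _ hax
          · exact hsupp _ _ h
        · rw [Finset.card_erase_of_mem hxs]
        · rw [Finset.card_erase_of_mem hxs]; omega
        · rw [Finset.card_erase_of_mem hxs]; omega
      by_cases hd1 : G.degree x ≤ 1
      · -- delete the vertex x
        refine hasMinor_mono (delVert_le G x) ?_
        have hcd := delVert_card_add G x
        refine ihn (s.card - 1) (by omega) (delVert G x).edgeFinset.card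
          (delVert G x) (s.erase x) ?_ ?_ rfl ?_ ?_
        · intro a b hab
          rw [Finset.mem_erase]
          exact ⟨hab.2.1, hsupp a b hab.1⟩
        · rw [Finset.card_erase_of_mem hxs]
        · rw [Finset.card_erase_of_mem hxs]; omega
        · rw [Finset.card_erase_of_mem hxs]; omega
      · push_neg at hd1
        by_cases hd2 : G.degree x = 2
        · -- contract an edge at x
          obtain ⟨a, ha⟩ := Finset.card_pos.mp
            (show 0 < (G.neighborFinset x).card by rw [SimpleGraph.card_neighborFinset_eq_degree]; omega)
          have ha' : G.Adj x a := by rwa [SimpleGraph.mem_neighborFinset] at ha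
          refine contractStep a ha'.symm ?_
          have hsub : G.neighborFinset a ∩ G.neighborFinset x ⊆
              (G.neighborFinset x).erase a := by
            intro z hz
            rw [Finset.mem_inter, SimpleGraph.mem_neighborFinset,
              SimpleGraph.mem_neighborFinset] at hz
            rw [Finset.mem_erase, SimpleGraph.mem_neighborFinset]
            exact ⟨hz.1.ne', hz.2⟩
          have hcle := Finset.card_le_card hsub
          have hce : ((G.neighborFinset x).erase a).card + 1 = (G.neighborFinset x).card :=
            Finset.card_erase_add_one ha
          have hdeg2 : (G.neighborFinset x).card = G.degree x := rfl
          omega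
        · have hd3 : G.degree x = 3 := by omega
          by_cases hcon : ∃ a, G.Adj a x ∧ (G.neighborFinset a ∩ G.neighborFinset x).card ≤ 1
          · obtain ⟨a, ha1, ha2⟩ := hcon
            exact contractStep a ha1 ha2
          · push_neg at hcon
            -- the neighborhood of x is a triangle
            have hNadj : ∀ a ∈ G.neighborFinset x, ∀ b ∈ G.neighborFinset x,
                a ≠ b → G.Adj a b := by
              intro a ha b hb hab
              rw [SimpleGraph.mem_neighborFinset] at ha hb
              have hma' : a ∈ G.neighborFinset x := by
                rw [SimpleGraph.mem_neighborFinset]; exact ha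
              have hmb' : b ∈ G.neighborFinset x := by
                rw [SimpleGraph.mem_neighborFinset]; exact hb
              have h2le := hcon a ha.symm
              have hsub : G.neighborFinset a ∩ G.neighborFinset x ⊆
                  (G.neighborFinset x).erase a := by
                intro z hz
                rw [Finset.mem_inter, SimpleGraph.mem_neighborFinset,
                  SimpleGraph.mem_neighborFinset] at hz
                rw [Finset.mem_erase, SimpleGraph.mem_neighborFinset]
                exact ⟨hz.1.ne', hz.2⟩
              have hce : ((G.neighborFinset x).erase a).card + 1 = (G.neighborFinset x).card :=
                Finset.card_erase_add_one hma'
              have hdeg2 : (G.neighborFinset x).card = G.degree x := rfl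
              have heq := Finset.eq_of_subset_of_card_le hsub (by omega)
              have hbmem : b ∈ G.neighborFinset a ∩ G.neighborFinset x := by
                rw [heq, Finset.mem_erase]
                exact ⟨hab.symm, hmb'⟩
              rw [Finset.mem_inter, SimpleGraph.mem_neighborFinset] at hbmem
              exact hbmem.1
            obtain ⟨a, b, c, hab, hac, hbc, hN⟩ := Finset.card_eq_three.mp
              (show (G.neighborFinset x).card = 3 by
                rw [SimpleGraph.card_neighborFinset_eq_degree]; exact hd3)
            have hma : a ∈ G.neighborFinset x := by rw [hN]; simp
            have hmb : b ∈ G.neighborFinset x := by rw [hN]; simp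
            have hmc : c ∈ G.neighborFinset x := by rw [hN]; simp
            have hxa : G.Adj x a := by rwa [SimpleGraph.mem_neighborFinset] at hma
            have hxb : G.Adj x b := by rwa [SimpleGraph.mem_neighborFinset] at hmb
            have hxc : G.Adj x c := by rwa [SimpleGraph.mem_neighborFinset] at hmc
            have hab' : G.Adj a b := hNadj a hma b hmb hab
            have hac' : G.Adj a c := hNadj a hma c hmc hac
            have hbc' : G.Adj b c := hNadj b hmb c hmc hbc
            refine hasMinor_of_clique G ![x, a, b, c] ?_ ?_
            · intro i j hij
              fin_cases i <;> fin_cases j <;>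
                first
                  | rfl
                  | exact absurd hij hxa.ne
                  | exact absurd hij hxb.ne
                  | exact absurd hij hxc.ne
                  | exact absurd hij hxa.ne'
                  | exact absurd hij hxb.ne'
                  | exact absurd hij hxc.ne'
                  | exact absurd hij hab
                  | exact absurd hij hac
                  | exact absurd hij hbc
                  | exact absurd hij (Ne.symm hab)
                  | exact absurd hij (Ne.symm hac)
                  | exact absurd hij (Ne.symm hbc)
            · intro i j hij
              fin_cases i <;> fin_cases j <;>
                first
                  | exact absurd rfl hij
                  | exact hxa | exact hxb | exact hxc
                  | exact hxa.symm | exact hxb.symm | exact hxc.symm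
                  | exact hab' | exact hac' | exact hbc'
                  | exact hab'.symm | exact hac'.symm | exact hbc'.symm

end MPAux

namespace MPAux

variable {V : Type*} [Fintype V] [DecidableEq V]

/-- A graph with at least `3n - 5` edges on a support of `n ≥ 3` vertices has a `K₅` minor. -/
theorem k5_minor (n : ℕ) : ∀ (m : ℕ) (G : SimpleGraph V) [DecidableRel G.Adj] (s : Finset V),
    (∀ a b, G.Adj a b → a ∈ s) → s.card = n → G.edgeFinset.card = m →
    3 ≤ s.card → 3 * s.card ≤ m + 5 → HasMinor G (⊤ : SimpleGraph (Fin 5)) := by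
  induction n using Nat.strong_induction_on with
  | _ n ihn =>
  intro m
  induction m using Nat.strong_induction_on with
  | _ m ihm =>
  intro G instG s hsupp hcard hecard hs3 hineq
  subst hcard hecard
  by_cases hn5 : s.card ≤ 4
  · exfalso
    have hch := edge_card_le_choose G s hsupp
    have h34 : s.card = 3 ∨ s.card = 4 := by omega
    rcases h34 with h | h
    · rw [h] at hch hineq
      have hv : Nat.choose 3 2 = 3 := rfl
      omega
    · rw [h] at hch hineq
      have hv : Nat.choose 4 2 = 6 := rfl
      omega
  · push_neg at hn5
    by_cases hm : 3 * s.card ≤ G.edgeFinset.card + 4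
    · -- surplus edge: delete one
      obtain ⟨u, v, huv⟩ := exists_adj_of_pos G (by omega)
      refine hasMinor_mono (delEdge_le G u v) ?_
      have hcd := delEdge_card_add G huv
      exact ihm (delEdge G u v).edgeFinset.card (by omega) (delEdge G u v) s
        (fun a b hab => hsupp a b hab.1) rfl rfl hs3 (by omega)
    · push_neg at hm
      have hmeq : G.edgeFinset.card + 5 = 3 * s.card := by omega
      by_cases hdel : ∃ x ∈ s, G.degree x ≤ 3
      · -- delete a vertex of degree at most 3
        obtain ⟨x, hxs, hdx⟩ := hdel
        refine hasMinor_mono (delVert_le G x) ?_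
        have hcd := delVert_card_add G x
        refine ihn (s.card - 1) (by omega) (delVert G x).edgeFinset.card
          (delVert G x) (s.erase x) ?_ ?_ rfl ?_ ?_
        · intro a b hab
          rw [Finset.mem_erase]
          exact ⟨hab.2.1, hsupp a b hab.1⟩
        · rw [Finset.card_erase_of_mem hxs]
        · rw [Finset.card_erase_of_mem hxs]; omega
        · rw [Finset.card_erase_of_mem hxs]; omega
      · push_neg at hdel
        by_cases hcon : ∃ a b, G.Adj a b ∧ (G.neighborFinset a ∩ G.neighborFinset b).card ≤ 2
        · -- contract an edge in at most two triangles
          obtain ⟨a, b, hab, hc⟩ := hcon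
          have h5 := contract_card G a b hab
          have hbs : b ∈ s := hsupp b a hab.symm
          refine hasMinor_of_contract hab (by norm_num) ?_
          refine ihn (s.card - 1) (by omega) (contract G a b).edgeFinset.card
            (contract G a b) (s.erase b) ?_ ?_ rfl ?_ ?_
          · intro p q hpq
            obtain ⟨hne, hpb, hqb, hcase⟩ := hpq
            rw [Finset.mem_erase]
            refine ⟨hpb, ?_⟩
            rcases hcase with h | ⟨rfl, _⟩ | ⟨_, h⟩
            · exact hsupp _ _ h
            · exact hsupp _ _ hab
            · exact hsupp _ _ h
          · rw [Finset.card_erase_of_mem hbs]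
          · rw [Finset.card_erase_of_mem hbs]; omega
          · rw [Finset.card_erase_of_mem hbs]; omega
        · push_neg at hcon
          -- minimum degree at least 4; a vertex of degree 4 or 5
          have hx : ∃ x ∈ s, G.degree x ≤ 5 := by
            by_contra h
            push_neg at h
            have hsum : 6 * s.card ≤ ∑ v ∈ s, G.degree v := by
              calc 6 * s.card = ∑ _v ∈ s, 6 := by
                    rw [Finset.sum_const, smul_eq_mul, mul_comm]
              _ ≤ _ := Finset.sum_le_sum (fun i hi => h i hi)
            have := degree_sum_le G s
            omega
          obtain ⟨x, hxs, hdx5⟩ := hx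
          have hdx4 : 4 ≤ G.degree x := by
            have := hdel x hxs
            omega
          have hdeg2 : (G.neighborFinset x).card = G.degree x := rfl
          have hRdeg : ∀ b ∈ G.neighborFinset x,
              3 ≤ (restrict G (G.neighborFinset x)).degree b := by
            intro b hb
            have hxb : G.Adj x b := by rwa [SimpleGraph.mem_neighborFinset] at hb
            have h3 := hcon x b hxb
            refine le_trans h3 (Finset.card_le_card ?_)
            intro z hz
            rw [Finset.mem_inter, SimpleGraph.mem_neighborFinset,
              SimpleGraph.mem_neighborFinset] at hz
            rw [SimpleGraph.mem_neighborFinset]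
            refine ⟨hz.2, hb, ?_⟩
            rw [SimpleGraph.mem_neighborFinset]
            exact hz.1
          have hRsum : 3 * G.degree x ≤
              2 * (restrict G (G.neighborFinset x)).edgeFinset.card := by
            have h1 := degree_sum_le (restrict G (G.neighborFinset x)) (G.neighborFinset x)
            have h2 : 3 * G.degree x ≤
                ∑ v ∈ G.neighborFinset x, (restrict G (G.neighborFinset x)).degree v := by
              calc 3 * G.degree x = ∑ _v ∈ G.neighborFinset x, 3 := by
                    rw [Finset.sum_const, smul_eq_mul, mul_comm, hdeg2]
              _ ≤ _ := Finset.sum_le_sum hRdeg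
            omega
          have hK4 : HasMinor (restrict G (G.neighborFinset x)) (⊤ : SimpleGraph (Fin 4)) := by
            refine k4_minor (G.neighborFinset x).card
              (restrict G (G.neighborFinset x)).edgeFinset.card
              (restrict G (G.neighborFinset x)) (G.neighborFinset x)
              (fun a b hab => hab.2.1) rfl rfl ?_ ?_
            · omega
            · omega
          exact hasMinor_succ_of_restrict G (by norm_num) hK4

end MPAux


open MPAux in
/-- In a maximal planar graph (a planar graph with `3n − 6` edges) on `n ≥ 5` vertices,
the vertices of degree `3` form an independent set. -/
theorem maximalPlanar_degree_three_indep {V : Type*} [Fintype V] [DecidableEq V]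
    (G : SimpleGraph V) [DecidableRel G.Adj] (hplanar : IsPlanar G)
    (hn : 5 ≤ Fintype.card V)
    (hmax : G.edgeFinset.card = 3 * Fintype.card V - 6) :
    ∀ u v : V, G.degree u = 3 → G.degree v = 3 → ¬ G.Adj u v := by
  intro u v hu hv hadj
  -- delete `u`
  have h1card : (delVert G u).edgeFinset.card + 3 = G.edgeFinset.card := by
    have := delVert_card_add G u
    rw [hu] at this
    exact this
  -- `v` has exactly two neighbours in `G₁`
  have hvdeg : (delVert G u).neighborFinset v = (G.neighborFinset v).erase u := by
    ext z
    rw [SimpleGraph.mem_neighborFinset, Finset.mem_erase, SimpleGraph.mem_neighborFinset]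
    constructor
    · rintro ⟨h, _, hz⟩
      exact ⟨hz, h⟩
    · rintro ⟨hz, h⟩
      exact ⟨h, hadj.ne', hz⟩
  have hc2 : ((delVert G u).neighborFinset v).card = 2 := by
    rw [hvdeg, Finset.card_erase_of_mem (by
      rw [SimpleGraph.mem_neighborFinset]; exact hadj.symm)]
    have : (G.neighborFinset v).card = G.degree v := rfl
    omega
  obtain ⟨c, hc⟩ := Finset.card_pos.mp (show 0 < ((delVert G u).neighborFinset v).card by omega)
  have hvc : (delVert G u).Adj v c := by rwa [SimpleGraph.mem_neighborFinset] at hc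
  -- the contracted edge lies in at most one triangle of `G₁`
  have hcommon : ((delVert G u).neighborFinset v ∩ (delVert G u).neighborFinset c).card ≤ 1 := by
    have hsub : (delVert G u).neighborFinset v ∩ (delVert G u).neighborFinset c ⊆
        ((delVert G u).neighborFinset v).erase c := by
      intro z hz
      rw [Finset.mem_inter, SimpleGraph.mem_neighborFinset,
        SimpleGraph.mem_neighborFinset] at hz
      rw [Finset.mem_erase, SimpleGraph.mem_neighborFinset]
      exact ⟨hz.2.ne', hz.1⟩
    refine le_trans (Finset.card_le_card hsub) ?_
    rw [Finset.card_erase_of_mem hc]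
    omega
  have h6 := contract_card (delVert G u) v c hvc
  -- apply the K₅ lemma to the contracted graph
  have hcu : c ≠ u := hvc.2.2
  have hcard2 : (((Finset.univ : Finset V).erase u).erase c).card = Fintype.card V - 2 := by
    rw [Finset.card_erase_of_mem (by
      rw [Finset.mem_erase]; exact ⟨hcu, Finset.mem_univ c⟩),
      Finset.card_erase_of_mem (Finset.mem_univ u), Finset.card_univ]
    omega
  have hK5 : HasMinor (contract (delVert G u) v c) (⊤ : SimpleGraph (Fin 5)) := by
    refine k5_minor (((Finset.univ : Finset V).erase u).erase c).card
      (contract (delVert G u) v c).edgeFinset.card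
      (contract (delVert G u) v c)
      (((Finset.univ : Finset V).erase u).erase c) ?_ rfl rfl ?_ ?_
    · intro p q hpq
      obtain ⟨hne, hpc, hqc, hcase⟩ := hpq
      rw [Finset.mem_erase, Finset.mem_erase]
      refine ⟨hpc, ?_, Finset.mem_univ p⟩
      rcases hcase with h | ⟨rfl, _⟩ | ⟨_, h⟩
      · exact h.2.1
      · exact hadj.ne'
      · exact h.2.1
    · omega
    · omega
  exact hplanar.1 (hasMinor_mono (delVert_le G u)
    (hasMinor_of_contract hvc (by norm_num) hK5))
end

section
/- In a maximal k-degenerate graph G on n ≥ k + 2 vertices, the vertices of degree k form an independent set, and for every i ≥ k+1 the subgraph induced by the vertices of degree i has chromatic number at most k + 1. -/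
open Finset

/-- `G` is `k`-degenerate: every nonempty set of vertices contains a vertex with at
most `k` neighbors inside the set. -/
def IsKDegenerate {V : Type*} [DecidableEq V] (k : ℕ) (G : SimpleGraph V)
    [DecidableRel G.Adj] : Prop :=
  ∀ S : Finset V, S.Nonempty → ∃ v ∈ S, (S.filter (G.Adj v)).card ≤ k

section Aux
variable {V : Type*} [DecidableEq V] (G : SimpleGraph V) [DecidableRel G.Adj]

/-- twice the number of edges within `S` -/
def degSum (S : Finset V) : ℕ := ∑ u ∈ S, (S.filter (G.Adj u)).card

lemma degSum_erase {S : Finset V} {v : V} (hv : v ∈ S) :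
    degSum G S = degSum G (S.erase v) + 2 * (S.filter (G.Adj v)).card := by
  classical
  set T := S.erase v with hT
  have hS : S = insert v T := by rw [hT, Finset.insert_erase hv]
  have hvT : v ∉ T := Finset.notMem_erase _ _
  have hfv : S.filter (G.Adj v) = T.filter (G.Adj v) := by
    rw [hS, Finset.filter_insert, if_neg (G.irrefl)]
  have hterm : ∀ u ∈ T, (S.filter (G.Adj u)).card
      = (T.filter (G.Adj u)).card + (if G.Adj u v then 1 else 0) := by
    intro u hu
    rw [hS, Finset.filter_insert]
    split_ifs with h
    · rw [Finset.card_insert_of_notMem (fun hc => hvT (Finset.mem_filter.mp hc).1)]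
    · rfl
  have : degSum G S = (S.filter (G.Adj v)).card + ∑ u ∈ T, (S.filter (G.Adj u)).card := by
    rw [degSum, hS, Finset.sum_insert hvT, ← hS]
  rw [this, Finset.sum_congr rfl hterm, Finset.sum_add_distrib]
  have : (∑ u ∈ T, if G.Adj u v then 1 else 0) = (T.filter (fun u => G.Adj u v)).card := by
    rw [Finset.card_filter]
  rw [this]
  have : T.filter (fun u => G.Adj u v) = T.filter (G.Adj v) := by
    apply Finset.filter_congr; intro x _; simp [G.adj_comm]
  rw [this, hfv, degSum]
  ring

lemma degSum_bound {k : ℕ} (hdeg : IsKDegenerate k G) :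
    ∀ n (S : Finset V), S.card = n → k ≤ n → degSum G S + k * (k + 1) ≤ 2 * k * n := by
  intro n
  induction n using Nat.strong_induction_on with
  | _ n ih =>
    intro S hcard hk
    rcases eq_or_lt_of_le hk with h | h
    · -- base: n = k, trivial bound degSum ≤ n*(n-1)
      have hb : degSum G S ≤ n * (n - 1) := by
        calc degSum G S ≤ ∑ u ∈ S, (n - 1) := by
              apply Finset.sum_le_sum
              intro u hu
              have : S.filter (G.Adj u) ⊆ S.erase u := by
                intro x hx
                rcases Finset.mem_filter.mp hx with ⟨hxS, hadj⟩
                exact Finset.mem_erase.mpr ⟨fun he => G.irrefl (he ▸ hadj), hxS⟩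
              calc (S.filter (G.Adj u)).card ≤ (S.erase u).card := Finset.card_le_card this
                _ = n - 1 := by rw [Finset.card_erase_of_mem hu, hcard]
          _ = n * (n - 1) := by rw [Finset.sum_const, hcard, smul_eq_mul]
      subst h
      rcases Nat.eq_zero_or_pos k with h0 | h0
      · subst h0; simpa using hb
      · obtain ⟨m, rfl⟩ := Nat.exists_eq_add_of_le h0
        simp only [Nat.add_sub_cancel_left] at hb ⊢
        nlinarith
    · -- inductive step
      have hne : S.Nonempty := Finset.card_pos.mp (by omega)
      obtain ⟨v, hvS, hvd⟩ := hdeg S hne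
      have hTcard : (S.erase v).card = n - 1 := by rw [Finset.card_erase_of_mem hvS, hcard]
      have ihT := ih (n - 1) (by omega) (S.erase v) hTcard (by omega)
      have hsplit := degSum_erase G hvS
      have key : 2 * k * (n - 1) + 2 * k = 2 * k * n := by
        have h1 : n - 1 + 1 = n := by omega
        calc 2 * k * (n - 1) + 2 * k = 2 * k * ((n - 1) + 1) := by ring
          _ = 2 * k * n := by rw [h1]
      calc degSum G S + k * (k + 1)
          = (degSum G (S.erase v) + k * (k + 1)) + 2 * (S.filter (G.Adj v)).card := by
            rw [hsplit]; ring
        _ ≤ 2 * k * (n - 1) + 2 * k := by omega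
        _ = 2 * k * n := key

lemma greedy_coloring {k : ℕ} (hdeg : IsKDegenerate k G) :
    ∀ n (S : Finset V), S.card = n →
      ∃ C : V → Fin (k + 1), ∀ u ∈ S, ∀ w ∈ S, G.Adj u w → C u ≠ C w := by
  intro n
  induction n using Nat.strong_induction_on with
  | _ n ih =>
    intro S hcard
    rcases Nat.eq_zero_or_pos n with h0 | h0
    · subst h0
      rw [Finset.card_eq_zero] at hcard
      exact ⟨fun _ => 0, by simp [hcard]⟩
    · have hne : S.Nonempty := Finset.card_pos.mp (by omega)
      obtain ⟨v, hvS, hvd⟩ := hdeg S hne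
      obtain ⟨C, hC⟩ := ih (n - 1) (by omega) (S.erase v)
        (by rw [Finset.card_erase_of_mem hvS, hcard])
      have h1 : ((S.filter (G.Adj v)).image C).card ≤ k :=
        le_trans (Finset.card_image_le) hvd
      have himg : (((S.filter (G.Adj v)).image C)ᶜ : Finset (Fin (k+1))).Nonempty := by
        rw [← Finset.card_pos, Finset.card_compl, Fintype.card_fin]
        omega
      obtain ⟨c, hc'⟩ := himg
      have hc : c ∉ (S.filter (G.Adj v)).image C := Finset.mem_compl.mp hc'
      refine ⟨Function.update C v c, ?_⟩
      intro u hu w hw hadj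
      by_cases huv : u = v <;> by_cases hwv : w = v
      · subst huv; subst hwv; exact absurd hadj (G.irrefl)
      · subst huv
        rw [Function.update_self, Function.update_of_ne hwv]
        intro he
        exact hc (he ▸ Finset.mem_image_of_mem C (Finset.mem_filter.mpr ⟨hw, hadj⟩))
      · subst hwv
        rw [Function.update_of_ne huv, Function.update_self]
        intro he
        exact hc (he ▸ Finset.mem_image_of_mem C
          (Finset.mem_filter.mpr ⟨hu, hadj.symm⟩))
      · rw [Function.update_of_ne huv, Function.update_of_ne hwv]
        exact hC u (Finset.mem_erase.mpr ⟨huv, hu⟩) w (Finset.mem_erase.mpr ⟨hwv, hw⟩) hadj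

end Aux

/-- In a maximal `k`-degenerate graph (a `k`-degenerate graph with `kn − k(k+1)/2`
edges) on `n ≥ k + 2` vertices, the vertices of degree `k` form an independent set,
and for every `i ≥ k + 1` the subgraph induced by the vertices of degree `i` has
chromatic number at most `k + 1`. -/
theorem maximalKDegenerate_props {V : Type*} [Fintype V] [DecidableEq V] (k : ℕ)
    (G : SimpleGraph V) [DecidableRel G.Adj] (hdeg : IsKDegenerate k G)
    (hn : k + 2 ≤ Fintype.card V)
    (hmax : G.edgeFinset.card = k * Fintype.card V - k * (k + 1) / 2) :
    (∀ u v : V, G.degree u = k → G.degree v = k → ¬ G.Adj u v) ∧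
    (∀ i : ℕ, k + 1 ≤ i →
      (G.induce {v : V | G.degree v = i}).chromaticNumber ≤ ((k + 1 : ℕ) : ℕ∞)) := by
  set n := Fintype.card V with hndef
  have hdegfilt : ∀ v : V, (Finset.univ.filter (G.Adj v)).card = G.degree v := by
    intro v
    rw [SimpleGraph.degree, SimpleGraph.neighborFinset_eq_filter]
  -- degSum univ + k*(k+1) = 2*k*n
  have hsum : degSum G Finset.univ = 2 * G.edgeFinset.card := by
    rw [← SimpleGraph.sum_degrees_eq_twice_card_edges, degSum]
    exact Finset.sum_congr rfl fun v _ => hdegfilt v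
  obtain ⟨m, hm⟩ : Even (k * (k + 1)) := Nat.even_mul_succ_self k
  have hm2 : k * (k + 1) = 2 * m := by omega
  have hkn : k * (k + 1) ≤ k * n := Nat.mul_le_mul_left k (by omega)
  have hdiv : k * (k + 1) / 2 = m := by omega
  have hE : G.edgeFinset.card = k * n - m := by rw [hmax, hdiv]
  have hftot : degSum G Finset.univ + k * (k + 1) = 2 * k * n := by
    have h4 : 2 * k * n = 2 * (k * n) := by ring
    rw [hsum, hE, hm2, h4]
    omega
  constructor
  · intro u v hu hv hadj
    have hk1 : 1 ≤ k := by
      rw [← hu, ← hdegfilt u]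
      exact Finset.card_pos.mpr ⟨v, Finset.mem_filter.mpr ⟨Finset.mem_univ v, hadj⟩⟩
    have huv : v ≠ u := fun h => G.irrefl (h ▸ hadj).symm
    -- erase u
    have h1 := degSum_erase G (Finset.mem_univ u)
    rw [hdegfilt u, hu] at h1
    -- erase v from univ.erase u
    have hvmem : v ∈ Finset.univ.erase u := Finset.mem_erase.mpr ⟨huv, Finset.mem_univ v⟩
    have h2 := degSum_erase G hvmem
    have hfv : ((Finset.univ.erase u).filter (G.Adj v)).card = k - 1 := by
      rw [Finset.filter_erase, Finset.card_erase_of_mem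
        (Finset.mem_filter.mpr ⟨Finset.mem_univ u, hadj.symm⟩), hdegfilt v, hv]
    rw [hfv] at h2
    have hcard2 : ((Finset.univ.erase u).erase v).card = n - 2 := by
      rw [Finset.card_erase_of_mem hvmem, Finset.card_erase_of_mem (Finset.mem_univ u),
        Finset.card_univ, ← hndef]
      omega
    have hb := degSum_bound G hdeg (n - 2) _ hcard2 (by omega)
    have key : 2 * k * (n - 2) + 4 * k = 2 * k * n := by
      have h3 : n - 2 + 2 = n := by omega
      calc 2 * k * (n - 2) + 4 * k = 2 * k * ((n - 2) + 2) := by ring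
        _ = 2 * k * n := by rw [h3]
    omega
  · intro i _
    obtain ⟨C, hC⟩ := greedy_coloring G hdeg (Finset.univ.card) Finset.univ rfl
    have hcol : G.Colorable (k + 1) :=
      ⟨SimpleGraph.Coloring.mk C fun {u w} hadj =>
        hC u (Finset.mem_univ u) w (Finset.mem_univ w) hadj⟩
    have : (G.induce {v : V | G.degree v = i}).Colorable (k + 1) :=
      SimpleGraph.Colorable.of_hom (SimpleGraph.Embedding.induce _).toHom hcol
    exact this.chromaticNumber_le
end

section
/- Let G be a graph with δ(G) ≥ 1 and let R be a regular independent set of G (an independent set all of whose vertices have the same degree in G). Then V(G) \ R is a fair dominating set of G; consequently fd(G) ≤ n − α_reg(G). -/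
open Finset

/-- `S` is a fair dominating set: all vertices outside `S` have the same non-zero
number of neighbors in `S`. -/
def IsFairDominatingSet {V : Type*} [Fintype V] [DecidableEq V] (G : SimpleGraph V)
    [DecidableRel G.Adj] (S : Finset V) : Prop :=
  ∃ m : ℕ, 0 < m ∧ ∀ v : V, v ∉ S → (S.filter (G.Adj v)).card = m

open Classical in
/-- The fair domination number: the minimum size of a fair dominating set. -/
noncomputable def fairDomNum {V : Type*} [Fintype V] [DecidableEq V] (G : SimpleGraph V)
    [DecidableRel G.Adj] : ℕ :=
  sInf {c : ℕ | ∃ S : Finset V, IsFairDominatingSet G S ∧ S.card = c}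

open Classical in
/-- The regular independence number: the maximum size of an independent set of vertices
of equal degree. -/
noncomputable def regIndepNum {V : Type*} [Fintype V] [DecidableEq V] (G : SimpleGraph V)
    [DecidableRel G.Adj] : ℕ :=
  univ.powerset.sup fun S =>
    if (∃ d : ℕ, ∀ v ∈ S, G.degree v = d) ∧ (∀ u ∈ S, ∀ v ∈ S, ¬ G.Adj u v)
    then S.card else 0

lemma aux_fair {V : Type*} [Fintype V] [DecidableEq V] (G : SimpleGraph V)
    [DecidableRel G.Adj] (hδ : ∀ v : V, 1 ≤ G.degree v) (R : Finset V)
    (hreg : ∃ d : ℕ, ∀ v ∈ R, G.degree v = d)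
    (hindep : ∀ u ∈ R, ∀ v ∈ R, ¬ G.Adj u v) :
    IsFairDominatingSet G (univ \ R) := by
  rcases R.eq_empty_or_nonempty with h | ⟨w, hw⟩
  · exact ⟨1, one_pos, fun v hv => absurd (mem_sdiff.mpr ⟨mem_univ v, by simp [h]⟩) hv⟩
  · obtain ⟨d, hd⟩ := hreg
    refine ⟨d, by rw [← hd w hw]; exact hδ w, fun v hv => ?_⟩
    have hvR : v ∈ R := by simpa using hv
    rw [← hd v hvR, ← SimpleGraph.card_neighborFinset_eq_degree]
    congr 1
    ext u
    simp only [mem_filter, mem_sdiff, mem_univ, true_and, SimpleGraph.mem_neighborFinset]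
    constructor
    · rintro ⟨_, h⟩; exact h
    · intro h; exact ⟨fun hu => hindep v hvR u hu h, h⟩

lemma aux_le {V : Type*} [Fintype V] [DecidableEq V] (G : SimpleGraph V)
    [DecidableRel G.Adj] (hδ : ∀ v : V, 1 ≤ G.degree v) (R : Finset V)
    (hreg : ∃ d : ℕ, ∀ v ∈ R, G.degree v = d)
    (hindep : ∀ u ∈ R, ∀ v ∈ R, ¬ G.Adj u v) :
    fairDomNum G ≤ Fintype.card V - R.card := by
  have hcard : (univ \ R).card = Fintype.card V - R.card := by
    rw [card_sdiff_of_subset (subset_univ R), card_univ]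
  exact Nat.sInf_le ⟨univ \ R, aux_fair G hδ R hreg hindep, hcard⟩

/-- If `δ(G) ≥ 1` and `R` is a regular independent set, then `V ∖ R` is a fair
dominating set; consequently `fd(G) ≤ n − α_reg(G)`. -/
theorem fairDom_of_regIndep {V : Type*} [Fintype V] [DecidableEq V] (G : SimpleGraph V)
    [DecidableRel G.Adj] (hδ : ∀ v : V, 1 ≤ G.degree v) (R : Finset V)
    (hreg : ∃ d : ℕ, ∀ v ∈ R, G.degree v = d)
    (hindep : ∀ u ∈ R, ∀ v ∈ R, ¬ G.Adj u v) :
    IsFairDominatingSet G (univ \ R) ∧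
    fairDomNum G ≤ Fintype.card V - regIndepNum G := by
  refine ⟨aux_fair G hδ R hreg hindep, ?_⟩
  classical
  obtain ⟨S, -, hS⟩ := Finset.exists_mem_eq_sup (univ.powerset : Finset (Finset V))
    ⟨∅, by simp⟩ (fun S => if (∃ d : ℕ, ∀ v ∈ S, G.degree v = d) ∧
      (∀ u ∈ S, ∀ v ∈ S, ¬ G.Adj u v) then S.card else 0)
  by_cases hc : (∃ d : ℕ, ∀ v ∈ S, G.degree v = d) ∧ (∀ u ∈ S, ∀ v ∈ S, ¬ G.Adj u v)
  · have : regIndepNum G = S.card := by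
      rw [regIndepNum, hS, if_pos hc]
    rw [this]
    exact aux_le G hδ S hc.1 hc.2
  · have : regIndepNum G = 0 := by
      rw [regIndepNum, hS, if_neg hc]
    rw [this, Nat.sub_zero]
    calc fairDomNum G ≤ Fintype.card V - (∅ : Finset V).card :=
          aux_le G hδ ∅ ⟨0, by simp⟩ (by simp)
      _ ≤ Fintype.card V := by simp
end

section
/- Let G be a graph and let H = G_{k+1} be the graph obtained by replacing each vertex of G with a clique on k+1 vertices and joining cliques completely along edges of G. Then the k-independence number of H equals (k+1)·α(G). -/
open Finset

/-- The graph obtained from `G` by replacing each vertex with a clique on `k+1`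
vertices, joining two cliques completely whenever the corresponding vertices of `G`
are adjacent (the lexicographic product `G[K_{k+1}]`). -/
def blowUp {V : Type*} (G : SimpleGraph V) (k : ℕ) : SimpleGraph (V × Fin (k + 1)) :=
  SimpleGraph.fromRel (fun a b => G.Adj a.1 b.1 ∨ a.1 = b.1)

open Classical in
/-- The independence number. -/
noncomputable def indepNum {V : Type*} [Fintype V] (G : SimpleGraph V) : ℕ :=
  univ.powerset.sup fun S =>
    if ∀ u ∈ S, ∀ v ∈ S, ¬ G.Adj u v then S.card else 0

open Classical in
/-- The `k`-independence number: the maximum size of a vertex set inducing a subgraph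
of maximum degree at most `k`. -/
noncomputable def kIndepNum {V : Type*} [Fintype V] [DecidableEq V] (G : SimpleGraph V)
    (k : ℕ) : ℕ :=
  univ.powerset.sup fun S =>
    if ∀ v ∈ S, (S.filter (fun u => G.Adj v u)).card ≤ k then S.card else 0

lemma blowUp_adj {V : Type*} (G : SimpleGraph V) (k : ℕ) (a b : V × Fin (k + 1)) :
    (blowUp G k).Adj a b ↔ a ≠ b ∧ (G.Adj a.1 b.1 ∨ a.1 = b.1) := by
  rw [blowUp, SimpleGraph.fromRel_adj]
  have h1 := G.adj_comm a.1 b.1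
  have h2 : b.1 = a.1 ↔ a.1 = b.1 := eq_comm
  tauto

open Classical in
/-- Greedy coloring: a finite set inducing a subgraph of max degree `≤ k` can be
properly colored with `k+1` colors. -/
lemma greedy_coloring_s18 {W : Type*} [DecidableEq W] (H : SimpleGraph W) (k : ℕ)
    (T : Finset W) :
    (∀ v ∈ T, (T.filter (fun u => H.Adj v u)).card ≤ k) →
    ∃ f : W → Fin (k + 1), ∀ u ∈ T, ∀ v ∈ T, H.Adj u v → f u ≠ f v := by
  induction T using Finset.strongInduction with
  | _ T ih =>
    intro h
    rcases T.eq_empty_or_nonempty with rfl | ⟨v, hv⟩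
    · exact ⟨fun _ => 0, by simp⟩
    · obtain ⟨f, hf⟩ := ih (T.erase v) (Finset.erase_ssubset hv)
        (fun u hu => le_trans
          (Finset.card_le_card (Finset.filter_subset_filter _ (Finset.erase_subset v T)))
          (h u (Finset.mem_of_mem_erase hu)))
      set img := ((T.erase v).filter (fun u => H.Adj v u)).image f with himg
      have hcard : img.card ≤ k := by
        refine le_trans Finset.card_image_le (le_trans ?_ (h v hv))
        exact Finset.card_le_card (Finset.filter_subset_filter _ (Finset.erase_subset v T))
      have hex : ∃ c : Fin (k + 1), c ∉ img := by
        by_contra hc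
        push_neg at hc
        have : (Finset.univ : Finset (Fin (k + 1))).card ≤ img.card :=
          Finset.card_le_card (fun c _ => hc c)
        simp at this
        omega
      obtain ⟨c, hc⟩ := hex
      refine ⟨Function.update f v c, ?_⟩
      intro u hu w hw hadj
      by_cases hu' : u = v <;> by_cases hw' : w = v
      · exact absurd (hu' ▸ hw' ▸ hadj) (H.irrefl)
      · subst hu'
        rw [Function.update_self, Function.update_of_ne hw']
        intro hcw
        exact hc (hcw ▸ Finset.mem_image_of_mem f
          (Finset.mem_filter.2 ⟨Finset.mem_erase.2 ⟨hw', hw⟩, hadj⟩))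
      · subst hw'
        rw [Function.update_self, Function.update_of_ne hu']
        intro hcw
        exact hc (hcw.symm ▸ Finset.mem_image_of_mem f
          (Finset.mem_filter.2 ⟨Finset.mem_erase.2 ⟨hu', hu⟩, hadj.symm⟩))
      · rw [Function.update_of_ne hu', Function.update_of_ne hw']
        exact hf u (Finset.mem_erase.2 ⟨hu', hu⟩) w (Finset.mem_erase.2 ⟨hw', hw⟩) hadj

open Classical in
lemma card_le_indepNum {V : Type*} [Fintype V] (G : SimpleGraph V) (S : Finset V)
    (hS : ∀ u ∈ S, ∀ v ∈ S, ¬ G.Adj u v) : S.card ≤ indepNum G := by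
  have := Finset.le_sup (f := fun S =>
      if ∀ u ∈ S, ∀ v ∈ S, ¬ G.Adj u v then S.card else 0)
    (Finset.mem_powerset.2 (Finset.subset_univ S))
  exact le_trans (le_of_eq (if_pos hS).symm) this

open Classical in
lemma card_le_kIndepNum {V : Type*} [Fintype V] [DecidableEq V] (G : SimpleGraph V)
    (k : ℕ) (S : Finset V)
    (hS : ∀ v ∈ S, (S.filter (fun u => G.Adj v u)).card ≤ k) : S.card ≤ kIndepNum G k := by
  have := Finset.le_sup (f := fun S =>
      if ∀ v ∈ S, (S.filter (fun u => G.Adj v u)).card ≤ k then S.card else 0)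
    (Finset.mem_powerset.2 (Finset.subset_univ S))
  exact le_trans (le_of_eq (if_pos hS).symm) this

open Classical in
lemma exists_indep {V : Type*} [Fintype V] (G : SimpleGraph V) :
    ∃ S : Finset V, (∀ u ∈ S, ∀ v ∈ S, ¬ G.Adj u v) ∧ indepNum G ≤ S.card := by
  obtain ⟨S, -, hS⟩ := Finset.exists_mem_eq_sup (univ.powerset : Finset (Finset V))
      ⟨∅, by simp⟩ (fun S => if ∀ u ∈ S, ∀ v ∈ S, ¬ G.Adj u v then S.card else 0)
  by_cases hc : ∀ u ∈ S, ∀ v ∈ S, ¬ G.Adj u v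
  · exact ⟨S, hc, le_of_eq (by rw [indepNum, hS, if_pos hc])⟩
  · refine ⟨∅, by simp, ?_⟩
    have : indepNum G = 0 := by rw [indepNum, hS, if_neg hc]
    simp [this]

open Classical in
lemma exists_kIndep {V : Type*} [Fintype V] [DecidableEq V] (G : SimpleGraph V) (k : ℕ) :
    ∃ S : Finset V, (∀ v ∈ S, (S.filter (fun u => G.Adj v u)).card ≤ k) ∧
      kIndepNum G k ≤ S.card := by
  obtain ⟨S, -, hS⟩ := Finset.exists_mem_eq_sup (univ.powerset : Finset (Finset V))
      ⟨∅, by simp⟩ (fun S => if ∀ v ∈ S, (S.filter (fun u => G.Adj v u)).card ≤ k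
        then S.card else 0)
  by_cases hc : ∀ v ∈ S, (S.filter (fun u => G.Adj v u)).card ≤ k
  · exact ⟨S, hc, le_of_eq (by rw [kIndepNum, hS, if_pos hc])⟩
  · refine ⟨∅, by simp, ?_⟩
    have : kIndepNum G k = 0 := by rw [kIndepNum, hS, if_neg hc]
    simp [this]

/-- `α_k(G[K_{k+1}]) = (k+1)·α(G)`. -/
theorem kIndepNum_blowUp {V : Type*} [Fintype V] [DecidableEq V] (G : SimpleGraph V)
    (k : ℕ) :
    kIndepNum (blowUp G k) k = (k + 1) * indepNum G := by
  classical
  apply le_antisymm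
  · -- upper bound
    obtain ⟨T, hcond, hT⟩ := exists_kIndep (blowUp G k) k
    refine le_trans hT ?_
    obtain ⟨f, hf⟩ := greedy_coloring_s18 (blowUp G k) k T hcond
    have hfib : T.card = ∑ i : Fin (k + 1), (T.filter (fun a => f a = i)).card :=
      Finset.card_eq_sum_card_fiberwise (fun x _ => Finset.mem_univ _)
    rw [hfib]
    have hclass : ∀ i : Fin (k + 1), (T.filter (fun a => f a = i)).card ≤ indepNum G := by
      intro i
      set Ti := T.filter (fun a => f a = i) with hTi
      have hindep : ∀ a ∈ Ti, ∀ b ∈ Ti, ¬ (blowUp G k).Adj a b := by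
        intro a ha b hb hadj
        obtain ⟨haT, hai⟩ := Finset.mem_filter.1 ha
        obtain ⟨hbT, hbi⟩ := Finset.mem_filter.1 hb
        exact hf a haT b hbT hadj (by rw [hai, hbi])
      have hinj : Set.InjOn Prod.fst (Ti : Set (V × Fin (k + 1))) := by
        intro a ha b hb hab
        by_contra hne
        exact hindep a ha b hb ((blowUp_adj G k a b).2 ⟨hne, Or.inr hab⟩)
      have hcardim : (Ti.image Prod.fst).card = Ti.card :=
        Finset.card_image_of_injOn hinj
      rw [← hcardim]
      apply card_le_indepNum
      intro u hu v hv hadj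
      obtain ⟨a, ha, rfl⟩ := Finset.mem_image.1 hu
      obtain ⟨b, hb, rfl⟩ := Finset.mem_image.1 hv
      have hne : a ≠ b := fun h => hadj.ne (by rw [h])
      exact hindep a ha b hb ((blowUp_adj G k a b).2 ⟨hne, Or.inl hadj⟩)
    calc ∑ i : Fin (k + 1), (T.filter (fun a => f a = i)).card
        ≤ ∑ _i : Fin (k + 1), indepNum G := Finset.sum_le_sum (fun i _ => hclass i)
      _ = (k + 1) * indepNum G := by simp [Finset.sum_const, mul_comm]
  · -- lower bound
    obtain ⟨S, hcond, hS⟩ := exists_indep G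
    refine le_trans (Nat.mul_le_mul_left _ hS) ?_
    set T := S ×ˢ (Finset.univ : Finset (Fin (k + 1))) with hTdef
    have hcardT : T.card = (k + 1) * S.card := by
      rw [hTdef, Finset.card_product]
      simp [mul_comm]
    rw [← hcardT]
    apply card_le_kIndepNum
    intro v hv
    have hv1 : v.1 ∈ S := (Finset.mem_product.1 hv).1
    have hsub : T.filter (fun u => (blowUp G k).Adj v u) ⊆
        ({v.1} ×ˢ (Finset.univ : Finset (Fin (k + 1)))).erase v := by
      intro u hu
      obtain ⟨huT, hadj⟩ := Finset.mem_filter.1 hu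
      obtain ⟨hne, hor⟩ := (blowUp_adj G k v u).1 hadj
      have hu1 : u.1 ∈ S := (Finset.mem_product.1 huT).1
      have heq : v.1 = u.1 := by
        rcases hor with h | h
        · exact absurd h (hcond v.1 hv1 u.1 hu1)
        · exact h
      refine Finset.mem_erase.2 ⟨fun h => hne h.symm,
        Finset.mem_product.2 ⟨?_, Finset.mem_univ _⟩⟩
      simp [heq]
    calc (T.filter (fun u => (blowUp G k).Adj v u)).card
        ≤ (({v.1} ×ˢ (Finset.univ : Finset (Fin (k + 1)))).erase v).card :=
          Finset.card_le_card hsub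
      _ = k := by
          rw [Finset.card_erase_of_mem
            (Finset.mem_product.2 ⟨Finset.mem_singleton_self _, Finset.mem_univ _⟩)]
          simp
end
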